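/- Let p be a prime, let α ≥ 3, and let G be a non-abelian group of order p^α. Then the intersection graph of subgroups I(G) contains a triangle, i.e., I(G) has a clique on 3 vertices. -/

import Mathlib

open SimpleGraph

/-- The intersection graph of subgroups of a group `G`: vertices are the
nontrivial proper subgroups of `G`, and two distinct vertices are adjacent
iff the corresponding subgroups have nontrivial intersection. -/
def interGraph (G : Type*) [Group G] :
    SimpleGraph {H : Subgroup G // H ≠ ⊥ ∧ H ≠ ⊤} where
  Adj H K := H ≠ K ∧ H.1 ⊓ K.1 ≠ ⊥
  symm := by
    constructor
    rintro H K ⟨hne, hint⟩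
    exact ⟨hne.symm, by rwa [inf_comm] at hint⟩
  loopless := by
    constructor
    rintro H ⟨hne, _⟩
    exact hne rfl

lemma aux_two_subgroups {p m : ℕ} (hp : p.Prime) (hm : 2 ≤ m) {Q : Type*} [Group Q]
    (hcard : Nat.card Q = p ^ m) (hnc : ¬ IsCyclic Q) :
    ∃ K1 K2 : Subgroup Q, K1 ≠ ⊥ ∧ K1 ≠ ⊤ ∧ K2 ≠ ⊥ ∧ K2 ≠ ⊤ ∧ K1 ≠ K2 := by
  haveI : Fact p.Prime := ⟨hp⟩
  haveI : Finite Q := Nat.finite_of_card_ne_zero (hcard ▸ pow_ne_zero m hp.pos.ne')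
  obtain ⟨K1, hK1⟩ := Sylow.exists_subgroup_card_pow_prime (G := Q) p (n := 1)
    (by rw [hcard, pow_one]; exact dvd_pow_self p (by omega))
  rw [pow_one] at hK1
  have hK1bot : K1 ≠ ⊥ := by
    intro h
    rw [h, Subgroup.card_bot] at hK1
    exact hp.one_lt.ne hK1
  have hlt : Nat.card K1 < Nat.card Q := by
    rw [hK1, hcard]
    calc p = p ^ 1 := (pow_one p).symm
    _ < p ^ m := Nat.pow_lt_pow_right hp.one_lt (by omega)
  have hK1top : K1 ≠ ⊤ := by
    intro h
    rw [h, Subgroup.card_top] at hlt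
    exact lt_irrefl _ hlt
  have hy : ∃ y, y ∉ K1 := by
    by_contra h
    push_neg at h
    exact hK1top ((Subgroup.eq_top_iff' K1).mpr h)
  obtain ⟨y, hy⟩ := hy
  have hz : Subgroup.zpowers y ≠ ⊤ := by
    intro h
    exact hnc ⟨⟨y, fun x => by show x ∈ Subgroup.zpowers y; rw [h]; trivial⟩⟩
  refine ⟨K1, Subgroup.zpowers y, hK1bot, hK1top, ?_, hz, ?_⟩
  · intro h
    have h1 : y ∈ (⊥ : Subgroup Q) := h ▸ Subgroup.mem_zpowers y
    rw [Subgroup.mem_bot] at h1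
    exact hy (h1 ▸ K1.one_mem)
  · intro h
    exact hy (h ▸ Subgroup.mem_zpowers y)

theorem intersectionGraph_has_triangle_of_nonabelian_p_group
    (p α : ℕ) (hp : p.Prime) (hα : 3 ≤ α) (G : Type*) [Group G]
    (hcard : Nat.card G = p ^ α) (hna : ¬ ∀ a b : G, a * b = b * a) :
    ∃ s, (interGraph G).IsNClique 3 s := by
  classical
  haveI : Fact p.Prime := ⟨hp⟩
  haveI hfin : Finite G := Nat.finite_of_card_ne_zero (hcard ▸ pow_ne_zero α hp.pos.ne')
  haveI : Nontrivial G := by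
    rw [← Finite.one_lt_card_iff_nontrivial, hcard]
    exact Nat.one_lt_pow (by omega) hp.one_lt
  have hpG : IsPGroup p G := IsPGroup.of_card hcard
  haveI hcenter : Nontrivial (Subgroup.center G) := hpG.center_nontrivial
  -- the center has an element of order p
  have hdvd : p ∣ Nat.card (Subgroup.center G) := by
    have h1 : Nat.card (Subgroup.center G) ∣ p ^ α := hcard ▸ Subgroup.card_subgroup_dvd_card _
    obtain ⟨k, hk, hEq⟩ := (Nat.dvd_prime_pow hp).mp h1
    have : k ≠ 0 := by
      intro h
      rw [h, pow_zero] at hEq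
      exact (Finite.one_lt_card_iff_nontrivial.mpr hcenter).ne' hEq
    rw [hEq]
    exact dvd_pow_self p this
  obtain ⟨z, hz⟩ := exists_prime_orderOf_dvd_card' (G := Subgroup.center G) p hdvd
  have hz0 : orderOf (z : G) = p := by rw [Subgroup.orderOf_coe, hz]
  set H1 : Subgroup G := Subgroup.zpowers (z : G) with hH1def
  have hH1card : Nat.card H1 = p := by rw [Nat.card_zpowers, hz0]
  have hH1le : H1 ≤ Subgroup.center G := Subgroup.zpowers_le.mpr z.2
  have hH1bot : H1 ≠ ⊥ := by
    intro h
    rw [h, Subgroup.card_bot] at hH1card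
    exact hp.one_lt.ne hH1card
  have hH1top : H1 ≠ ⊤ := by
    intro h
    rw [h, Subgroup.card_top, hcard] at hH1card
    have : p ^ 1 = p ^ α := by rw [pow_one, hH1card]
    have := Nat.pow_right_injective hp.two_le this
    omega
  haveI hH1norm : H1.Normal := by
    constructor
    intro n hn g
    have hc : ∀ x : G, x * n = n * x := Subgroup.mem_center_iff.mp (hH1le hn)
    have : g * n * g⁻¹ = n := by rw [hc g, mul_assoc, mul_inv_cancel, mul_one]
    rwa [this]
  -- the quotient
  set Q := G ⧸ H1 with hQdef
  obtain ⟨β, rfl⟩ : ∃ β, α = β + 1 := ⟨α - 1, by omega⟩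
  have hQcard : Nat.card Q = p ^ β := by
    have h1 : Nat.card G = Nat.card Q * Nat.card H1 :=
      Subgroup.card_eq_card_quotient_mul_card_subgroup H1
    rw [hcard, hH1card, pow_succ] at h1
    exact Nat.eq_of_mul_eq_mul_right hp.pos h1.symm
  have hQnc : ¬ IsCyclic Q := by
    intro hc
    refine hna (fun a b => ?_)
    refine commutative_of_cyclic_center_quotient (QuotientGroup.mk' H1) ?_ a b
    rw [QuotientGroup.ker_mk']
    exact hH1le
  obtain ⟨K1, K2, hK1bot, hK1top, hK2bot, hK2top, hK12⟩ :=
    aux_two_subgroups hp (by omega) hQcard hQnc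
  -- pull back to G
  have hsurj : Function.Surjective (QuotientGroup.mk' H1) := QuotientGroup.mk'_surjective H1
  set K1' := K1.comap (QuotientGroup.mk' H1) with hK1'def
  set K2' := K2.comap (QuotientGroup.mk' H1) with hK2'def
  have hker : ((QuotientGroup.mk' H1)).ker = H1 := QuotientGroup.ker_mk' H1
  have hleK1 : H1 ≤ K1' := hker ▸ Subgroup.ker_le_comap _ _
  have hleK2 : H1 ≤ K2' := hker ▸ Subgroup.ker_le_comap _ _
  have hinj := Subgroup.comap_injective (f := QuotientGroup.mk' H1) hsurj
  have hH1eq : H1 = Subgroup.comap (QuotientGroup.mk' H1) ⊥ := by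
    rw [MonoidHom.comap_bot, hker]
  have hK1'bot : K1' ≠ ⊥ := fun h => hH1bot (le_bot_iff.mp (h ▸ hleK1))
  have hK2'bot : K2' ≠ ⊥ := fun h => hH1bot (le_bot_iff.mp (h ▸ hleK2))
  have hK1'top : K1' ≠ ⊤ := by
    intro h
    exact hK1top (hinj (by rw [← hK1'def, h, Subgroup.comap_top]))
  have hK2'top : K2' ≠ ⊤ := by
    intro h
    exact hK2top (hinj (by rw [← hK2'def, h, Subgroup.comap_top]))
  have hK1'H1 : K1' ≠ H1 := by
    intro h
    exact hK1bot (hinj (by rw [← hK1'def, h, ← hH1eq]))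
  have hK2'H1 : K2' ≠ H1 := by
    intro h
    exact hK2bot (hinj (by rw [← hK2'def, h, ← hH1eq]))
  have hK1'K2' : K1' ≠ K2' := fun h => hK12 (hinj h)
  -- the three vertices
  refine ⟨{⟨H1, hH1bot, hH1top⟩, ⟨K1', hK1'bot, hK1'top⟩, ⟨K2', hK2'bot, hK2'top⟩}, ?_⟩
  rw [SimpleGraph.is3Clique_triple_iff]
  refine ⟨⟨?_, ?_⟩, ⟨?_, ?_⟩, ⟨?_, ?_⟩⟩
  · exact fun h => hK1'H1 (congrArg Subtype.val h).symm
  · exact fun h => hH1bot (le_bot_iff.mp (h ▸ le_inf le_rfl hleK1))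
  · exact fun h => hK2'H1 (congrArg Subtype.val h).symm
  · exact fun h => hH1bot (le_bot_iff.mp (h ▸ le_inf le_rfl hleK2))
  · exact fun h => hK1'K2' (congrArg Subtype.val h)
  · exact fun h => hH1bot (le_bot_iff.mp (h ▸ le_inf hleK1 hleK2))
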